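/- Let A be an algebra and let ⟨⟨·,…,·⟩⟩ₙ be multilinear functionals (n+1 arguments, n ≥ 0) on A with values in a vector space, satisfying: (i) the insertion relation Σ_{i=0}^{n} ⟨⟨A₀,…,A_i, 1, A_{i+1},…,A_n⟩⟩_{n+1} = ⟨⟨A₀,…,A_n⟩⟩ₙ for all A_j; define B on cochains ψ_{n+1}(f₀,…,f_{n+1}) = ⟨⟨f₀,[𝔹,f₁],…,[𝔹,f_{n+1}]⟩⟩ by the cyclic sum formula for a derivation-like bracket [𝔹,·]. Then (Bψ_{n+1})(f₀,…,f_n) = ⟨⟨[𝔹,f₀],[𝔹,f₁],…,[𝔹,f_n]⟩⟩, provided the functionals are graded-cyclically invariant. -/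

import Mathlib

open Finset

private lemma auxlt (c : ℕ) : ∀ N : ℕ,
    (∑ k ∈ Finset.range N, if k < c then (if k = 0 then (0:ℕ) else 1) else 0)
      = min c N - min 1 (min c N) := by
  intro N
  induction N with
  | zero => simp
  | succ N ih =>
      rw [Finset.sum_range_succ, ih]
      split_ifs <;> omega

private lemma auxge (c : ℕ) : ∀ N : ℕ,
    (∑ k ∈ Finset.range N, if c ≤ k then (if k = 0 then (0:ℕ) else 1) else 0)
      = N - max c (min 1 N) := by
  intro N
  induction N with
  | zero => simp
  | succ N ih =>
      rw [Finset.sum_range_succ, ih]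
      split_ifs <;> omega

/-- Connes' `B`-operator computation for JLO-type cochains. `F n` plays the
role of the multilinear functional `⟨⟨A₀,…,A_n⟩⟩ₙ`, `δ` of the bracket
`[𝔹,·]` (an odd map, sending everything to degree-1 homogeneous elements),
and the cochain is `ψ_{n}(f₀,…,f_n) = F n (f₀, δf₁, …, δf_n)` for degree-0
entries `f_j`. Assuming graded cyclic invariance and the insertion relation
`Σ_i ⟨⟨A₀,…,A_i,1,A_{i+1},…,A_n⟩⟩ = ⟨⟨A₀,…,A_n⟩⟩`, Connes' operator `B`
applied to `ψ_{n+1}` gives `(Bψ_{n+1})(f₀,…,f_n) = ⟨⟨δf₀, δf₁, …, δf_n⟩⟩`. -/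
theorem stmt_17 {A M : Type*} [Monoid A] [AddCommGroup M]
    (homog : ℕ → Set A)
    (F : ∀ n : ℕ, (Fin (n+1) → A) → M)
    (δ : A → A)
    (h1 : (1 : A) ∈ homog 0)
    (hδ : ∀ a : A, δ a ∈ homog 1)
    -- graded cyclic invariance:
    (hcyc : ∀ (n : ℕ) (g : Fin (n+1) → A) (dg : Fin (n+1) → ℕ),
      (∀ m, g m ∈ homog (dg m)) → ∀ i : Fin (n+1),
      F n g = ((-1 : ℤ) ^
          ((∑ m ∈ univ.filter (fun m : Fin (n+1) => (m : ℕ) < (i : ℕ)), dg m) *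
           (∑ m ∈ univ.filter (fun m : Fin (n+1) => (i : ℕ) ≤ (m : ℕ)), dg m))) •
        F n (fun m => g (m + i)))
    -- insertion of the unit:
    (hins : ∀ (n : ℕ) (g : Fin (n+1) → A),
      (∑ i : Fin (n+1), F (n+1) (fun m : Fin (n+2) =>
        if h : (m : ℕ) ≤ (i : ℕ) then g ⟨(m : ℕ), Nat.lt_of_le_of_lt h i.isLt⟩
        else if (m : ℕ) = (i : ℕ) + 1 then 1
        else g ⟨(m : ℕ) - 1, by have := m.isLt; omega⟩)) = F n g) :
    ∀ (n : ℕ) (f : Fin (n+1) → A),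
      (∑ j : Fin (n+1), ((-1 : ℤ) ^ (n * (j : ℕ))) •
        F (n+1) (fun m : Fin (n+2) =>
          if h : m = 0 then 1 else δ (f (j + m.pred h))))
      = F n (fun m => δ (f m)) := by
  intro n f
  rw [← hins n (fun m => δ (f m))]
  rw [← Equiv.sum_comp (Equiv.addRight (1 : Fin (n+1)))]
  refine Finset.sum_congr rfl ?_
  intro i' _
  simp only [Equiv.coe_addRight]
  set k := (i' : ℕ) with hk
  have hkn : k ≤ n := Nat.lt_succ_iff.mp i'.isLt
  set j : Fin (n+1) := i' + 1 with hj
  have hjval : (j : ℕ) = (k + 1) % (n+1) := by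
    rw [hj, Fin.val_add, Fin.val_one', Nat.add_mod_mod]
  set i : Fin (n+2) := ⟨n+1-k, by omega⟩ with hi
  set dg : Fin (n+2) → ℕ := fun m => if (m : ℕ) = 0 then 0 else 1 with hdg
  set gj : Fin (n+2) → A :=
    (fun m : Fin (n+2) => if h : m = 0 then 1 else δ (f (j + m.pred h))) with hgj
  have hmem : ∀ m, gj m ∈ homog (dg m) := by
    intro m
    by_cases hm : m = 0
    · subst hm; simp [hgj, hdg, h1]
    · have hv : (m : ℕ) ≠ 0 := fun h => hm (Fin.ext h)
      simp [hgj, hdg, hm, hv, hδ]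
  rw [hcyc (n+1) gj dg hmem i]
  -- establish the rotated function equals the insertion function
  have hfun : (fun m : Fin (n+2) => gj (m + i)) =
      (fun m : Fin (n+2) =>
        if h : (m : ℕ) ≤ (i' : ℕ) then
          (fun m => δ (f m)) ⟨(m : ℕ), Nat.lt_of_le_of_lt h i'.isLt⟩
        else if (m : ℕ) = (i' : ℕ) + 1 then 1
        else (fun m => δ (f m)) ⟨(m : ℕ) - 1, by have := m.isLt; omega⟩) := by
    funext m
    have hmi : ((m + i : Fin (n+2)) : ℕ) = ((m : ℕ) + (n+1-k)) % (n+2) := by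
      rw [Fin.val_add]
    by_cases hA : (m : ℕ) ≤ k
    · have hv : ((m + i : Fin (n+2)) : ℕ) = (m : ℕ) + (n+1) - k := by
        rw [hmi, Nat.mod_eq_of_lt (by omega)]; omega
      have hne : (m + i) ≠ 0 := by
        intro h
        have : ((m + i : Fin (n+2)) : ℕ) = 0 := by rw [h]; rfl
        omega
      rw [hgj]
      simp only [dif_neg hne, dif_pos hA]
      rw [dif_pos (by omega)]
      have harg : ((j + (m + i).pred hne : Fin (n+1)) : ℕ) = (m : ℕ) := by
        rw [Fin.val_add, Fin.coe_pred, hv, hjval, Nat.mod_add_mod]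
        rw [show k + 1 + ((m : ℕ) + (n+1) - k - 1) = (m : ℕ) + (n+1) by omega]
        rw [Nat.add_mod_right, Nat.mod_eq_of_lt (by omega)]
      exact congrArg (fun x => δ (f x)) (Fin.ext (b := ⟨(m : ℕ), by omega⟩) harg)
    · by_cases hB : (m : ℕ) = k + 1
      · have hv0 : ((m + i : Fin (n+2)) : ℕ) = 0 := by
          rw [hmi, show (m : ℕ) + (n+1-k) = n+2 by omega, Nat.mod_self]
        have h0 : m + i = 0 := Fin.ext (by simpa using hv0)
        rw [hgj]
        simp only [dif_pos h0, dif_neg hA, if_pos hB]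
        rw [dif_neg (by omega), if_pos (by omega)]
      · have hC : k + 2 ≤ (m : ℕ) := by omega
        have hm2 : (m : ℕ) ≤ n + 1 := Nat.lt_succ_iff.mp m.isLt
        have hv : ((m + i : Fin (n+2)) : ℕ) = (m : ℕ) - 1 - k := by
          rw [hmi, Nat.mod_eq_sub_mod (by omega),
            show (m : ℕ) + (n+1-k) - (n+2) = (m : ℕ) - 1 - k by omega]
          exact Nat.mod_eq_of_lt (by omega)
        have hne : (m + i) ≠ 0 := by
          intro h
          have : ((m + i : Fin (n+2)) : ℕ) = 0 := by rw [h]; rfl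
          omega
        rw [hgj]
        simp only [dif_neg hne, dif_neg hA, if_neg hB]
        rw [dif_neg (by omega), if_neg (by omega)]
        have harg : ((j + (m + i).pred hne : Fin (n+1)) : ℕ) = (m : ℕ) - 1 := by
          rw [Fin.val_add, Fin.coe_pred, hv, hjval, Nat.mod_add_mod]
          rw [show k + 1 + ((m : ℕ) - 1 - k - 1) = (m : ℕ) - 1 by omega]
          exact Nat.mod_eq_of_lt (by omega)
        exact congrArg (fun x => δ (f x)) (Fin.ext (b := ⟨(m : ℕ) - 1, by omega⟩) harg)
  rw [hfun, smul_smul, ← pow_add]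
  -- compute the two degree sums
  have hS1 : (∑ m ∈ univ.filter (fun m : Fin (n+2) => (m : ℕ) < (i : ℕ)), dg m)
      = n - k := by
    rw [Finset.sum_filter]
    rw [Fin.sum_univ_eq_sum_range
      (fun x => if x < (i : ℕ) then (if x = 0 then (0:ℕ) else 1) else 0)]
    rw [auxlt]
    have : (i : ℕ) = n + 1 - k := rfl
    omega
  have hS2 : (∑ m ∈ univ.filter (fun m : Fin (n+2) => (i : ℕ) ≤ (m : ℕ)), dg m)
      = k + 1 := by
    rw [Finset.sum_filter]
    rw [Fin.sum_univ_eq_sum_range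
      (fun x => if (i : ℕ) ≤ x then (if x = 0 then (0:ℕ) else 1) else 0)]
    rw [auxge]
    have : (i : ℕ) = n + 1 - k := rfl
    omega
  rw [hS1, hS2]
  have heven : Even (n * (j : ℕ) + (n - k) * (k + 1)) := by
    rcases Nat.lt_or_ge k n with hlt | hge
    · have hjv : (j : ℕ) = k + 1 := by rw [hjval]; exact Nat.mod_eq_of_lt (by omega)
      obtain ⟨d, hd⟩ : ∃ d, n = k + d := ⟨n - k, by omega⟩
      have he : n * (j : ℕ) + (n - k) * (k + 1) = (k + 1) * (k + 2 * d) := by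
        rw [hjv, hd, Nat.add_sub_cancel_left]; ring
      rw [he]
      rcases Nat.even_or_odd k with h | h
      · exact Nat.even_mul.2 (Or.inr (by rw [Nat.even_iff] at h ⊢; omega))
      · exact Nat.even_mul.2 (Or.inl (by rw [Nat.odd_iff] at h; rw [Nat.even_iff]; omega))
    · have hkn' : k = n := le_antisymm hkn hge
      have hjv : (j : ℕ) = 0 := by rw [hjval, hkn', Nat.mod_self]
      rw [hjv, hkn']
      simp
  rw [heven.neg_one_pow, one_smul]
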